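/- Let J ∈ ℝ^{d×d} and let H₁, …, H_d ∈ ℝ^{d×d} be symmetric matrices with ‖J‖₂ ≤ B′ and ‖H_c‖₂ ≤ B″ for all c ∈ {1,…,d}. Define K^c := J·H_c·Jᵀ for each c. Then ‖ Σ_{c=1}^d Σ_{e=1}^d (K^c)_{c e} · K^e ‖₂ ≤ d^{3/2} · B′⁴ · B″², where (K^c)_{ce} denotes the (c,e) entry of K^c. (This is a matrix inequality established in the paper's proof bounding the Hessian of the log-Jacobian-determinant of an inverse map.) -/
import Mathlib

open Matrix
open scoped Matrix.Norms.L2Operator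

section Aux

lemma l2OpNorm_eq' {d : ℕ} (A : Matrix (Fin d) (Fin d) ℝ) :
    ‖(Matrix.toEuclideanCLM (𝕜 := ℝ) A :
      EuclideanSpace ℝ (Fin d) →L[ℝ] EuclideanSpace ℝ (Fin d))‖ = ‖A‖ := rfl

lemma l2_opNorm_transpose' {d : ℕ} (A : Matrix (Fin d) (Fin d) ℝ) : ‖Aᵀ‖ = ‖A‖ := by
  rw [← conjTranspose_eq_transpose_of_trivial, l2_opNorm_conjTranspose]

lemma row_abs_sum_le' {d : ℕ} (A : Matrix (Fin d) (Fin d) ℝ) (c : Fin d) :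
    ∑ e, |A c e| ≤ Real.sqrt d * ‖A‖ := by
  have hv : ‖(EuclideanSpace.equiv (Fin d) ℝ).symm (Aᵀ *ᵥ (EuclideanSpace.single c (1:ℝ)))‖
      ≤ ‖Aᵀ‖ * ‖EuclideanSpace.single c (1:ℝ)‖ := l2_opNorm_mulVec _ _
  rw [EuclideanSpace.norm_single, norm_one, mul_one, l2_opNorm_transpose'] at hv
  set v := (EuclideanSpace.equiv (Fin d) ℝ).symm (Aᵀ *ᵥ (EuclideanSpace.single c (1:ℝ))) with hvdef
  have hve : ∀ e, v e = A c e := by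
    intro e
    show (Aᵀ *ᵥ (EuclideanSpace.single c (1:ℝ))) e = A c e
    simp [mulVec, dotProduct, EuclideanSpace.single_apply]
  calc ∑ e, |A c e| = ∑ e, (1 : ℝ) * |v e| := by simp [hve]
    _ ≤ Real.sqrt (∑ _e : Fin d, (1:ℝ)^2) * Real.sqrt (∑ e, |v e|^2) :=
        Real.sum_mul_le_sqrt_mul_sqrt _ _ _
    _ = Real.sqrt d * ‖v‖ := by
        rw [EuclideanSpace.norm_eq]
        simp [sq_abs]
    _ ≤ Real.sqrt d * ‖A‖ := mul_le_mul_of_nonneg_left hv (Real.sqrt_nonneg _)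

end Aux

/-- The `ℓ²` operator norm of a square real matrix. -/
noncomputable def l2OpNorm {d : ℕ} (A : Matrix (Fin d) (Fin d) ℝ) : ℝ :=
  ‖(Matrix.toEuclideanCLM (𝕜 := ℝ) A :
      EuclideanSpace ℝ (Fin d) →L[ℝ] EuclideanSpace ℝ (Fin d))‖

/-- Matrix inequality from the paper's bound on the Hessian of the log-Jacobian-determinant:
with `K^c := J · H_c · Jᵀ`, `‖J‖₂ ≤ B′` and `‖H_c‖₂ ≤ B″` for symmetric `H_c`,
`‖Σ_{c,e} (K^c)_{ce} · K^e‖₂ ≤ d^{3/2} · B′⁴ · B″²`. -/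
theorem sum_KcKe_l2OpNorm_bound
    {d : ℕ} (J : Matrix (Fin d) (Fin d) ℝ) (H : Fin d → Matrix (Fin d) (Fin d) ℝ)
    (hsymm : ∀ c, (H c).IsSymm) (B' B'' : ℝ)
    (hJ : l2OpNorm J ≤ B') (hH : ∀ c, l2OpNorm (H c) ≤ B'') :
    l2OpNorm (∑ c, ∑ e, (J * H c * Jᵀ) c e • (J * H e * Jᵀ)) ≤
      (d : ℝ) ^ ((3 : ℝ) / 2) * B' ^ 4 * B'' ^ 2 := by
  simp only [l2OpNorm, l2OpNorm_eq'] at *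
  rcases Nat.eq_zero_or_pos d with hd | hd
  · subst hd
    simp only [Finset.univ_eq_empty, Finset.sum_empty, norm_zero, Nat.cast_zero]
    rw [Real.zero_rpow (by norm_num)]
    simp
  have hB' : 0 ≤ B' := (norm_nonneg J).trans hJ
  have hB'' : 0 ≤ B'' := (norm_nonneg (H ⟨0, hd⟩)).trans (hH _)
  set K : Fin d → Matrix (Fin d) (Fin d) ℝ := fun c => J * H c * Jᵀ with hKdef
  have hK : ∀ c, ‖K c‖ ≤ B' ^ 2 * B'' := by
    intro c
    calc ‖J * H c * Jᵀ‖ ≤ ‖J * H c‖ * ‖Jᵀ‖ := l2_opNorm_mul _ _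
      _ ≤ ‖J‖ * ‖H c‖ * ‖Jᵀ‖ :=
          mul_le_mul_of_nonneg_right (l2_opNorm_mul _ _) (norm_nonneg _)
      _ = ‖J‖ * ‖H c‖ * ‖J‖ := by rw [l2_opNorm_transpose']
      _ ≤ B' * B'' * B' := by
          gcongr ?_ * ?_ * ?_ <;> first | exact hJ | exact hH c
      _ = B' ^ 2 * B'' := by ring
  have hrow : ∀ c, ∑ e, |K c c e| ≤ Real.sqrt d * (B' ^ 2 * B'') := by
    intro c
    refine (row_abs_sum_le' (K c) c).trans ?_
    exact mul_le_mul_of_nonneg_left (hK c) (Real.sqrt_nonneg _)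
  have key : ‖∑ c, ∑ e, K c c e • K e‖ ≤ (d : ℝ) * (Real.sqrt d * (B' ^ 2 * B'')) * (B' ^ 2 * B'') := by
    calc ‖∑ c, ∑ e, K c c e • K e‖ ≤ ∑ c, ‖∑ e, K c c e • K e‖ := norm_sum_le _ _
      _ ≤ ∑ c, ∑ e : Fin d, ‖K c c e • K e‖ := by
          exact Finset.sum_le_sum fun c _ => norm_sum_le _ _
      _ = ∑ c, ∑ e, |K c c e| * ‖K e‖ := by
          simp [norm_smul, Real.norm_eq_abs]
      _ ≤ ∑ c, ∑ e, |K c c e| * (B' ^ 2 * B'') := by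
          refine Finset.sum_le_sum fun c _ => Finset.sum_le_sum fun e _ => ?_
          exact mul_le_mul_of_nonneg_left (hK e) (abs_nonneg _)
      _ = ∑ c, (∑ e, |K c c e|) * (B' ^ 2 * B'') := by
          simp [Finset.sum_mul]
      _ ≤ ∑ _c : Fin d, (Real.sqrt d * (B' ^ 2 * B'')) * (B' ^ 2 * B'') := by
          refine Finset.sum_le_sum fun c _ => ?_
          exact mul_le_mul_of_nonneg_right (hrow c) (by positivity)
      _ = (d : ℝ) * (Real.sqrt d * (B' ^ 2 * B'')) * (B' ^ 2 * B'') := by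
          simp [Finset.sum_const]; ring
  refine key.trans (le_of_eq ?_)
  have hpow : (d : ℝ) ^ ((3 : ℝ) / 2) = (d : ℝ) * Real.sqrt d := by
    rw [show (3 : ℝ) / 2 = 1 + 1 / 2 by norm_num,
      Real.rpow_add' (Nat.cast_nonneg d) (by norm_num), Real.rpow_one,
      ← Real.sqrt_eq_rpow]
  rw [hpow]; ring
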